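/- Let (V, ‖·‖) be a normed vector space, ε > 0, and Θ ⊆ V convex with 0 ∈ Θ. Let x be in the relative interior of B_Θ(0, 4ε) (so x ∈ Θ and ‖x‖ < 4ε), let W be a (2ε − ‖x‖/2)-cover of ∂B_Θ(x, 4ε − ‖x‖)[x, Θ ∖ B_Θ(0, 12ε)], and let w ∈ W. If λ ≥ 0 satisfies ‖x + λ(w − x)‖ = 4ε, then x + λ(w − x) ∈ Θ. -/
import Mathlib


section GeomDefs

variable {V : Type*} [NormedAddCommGroup V] [NormedSpace ℝ V]

/-- The relative boundary `∂S = closure S \ relint S` of a set. -/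
def relBoundary (S : Set V) : Set V := closure S \ intrinsicInterior ℝ S

/-- `S[a, B]`: the intersection of `S` with all line segments from `a` to points of `B`. -/
def segBetween (S : Set V) (a : V) (B : Set V) : Set V :=
  S ∩ ⋃ b ∈ B, segment ℝ a b

/-- Minimum cardinality of an internal `δ`-cover of `Θ`; `⊤` if no finite cover exists. -/
noncomputable def coverNum (Θ : Set V) (δ : ℝ) : ℕ∞ :=
  sInf {x : ℕ∞ | ∃ X : Finset V, ↑X ⊆ Θ ∧ (∀ θ ∈ Θ, ∃ v ∈ X, ‖θ - v‖ ≤ δ) ∧ x = (X.card : ℕ∞)}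

/-- `X` is an internal `δ`-cover of `T`. -/
def IsCoverOf (X T : Set V) (δ : ℝ) : Prop :=
  X ⊆ T ∧ ∀ t ∈ T, ∃ x ∈ X, ‖t - x‖ ≤ δ

end GeomDefs

/-- Let `Θ` be convex with `0 ∈ Θ`, let `x` be in the relative interior of
`B_Θ(0, 4ε)` (so `x ∈ Θ` and `‖x‖ < 4ε`), and let `W` be a `(2ε - ‖x‖/2)`-cover of
`∂B_Θ(x, 4ε - ‖x‖)[x, Θ ∖ B_Θ(0, 12ε)]`. For any `w ∈ W` and `λ ≥ 0` with
`‖x + λ(w - x)‖ = 4ε`, the point `x + λ(w - x)` lies in `Θ`. -/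
theorem statement10 {V : Type*} [NormedAddCommGroup V] [NormedSpace ℝ V]
    (ε : ℝ) (hε : 0 < ε) (Θ : Set V) (hconv : Convex ℝ Θ) (h0 : (0 : V) ∈ Θ)
    (x : V) (hxrel : x ∈ intrinsicInterior ℝ (Θ ∩ Metric.closedBall 0 (4 * ε)))
    (hxΘ : x ∈ Θ) (hxlt : ‖x‖ < 4 * ε)
    (W : Set V)
    (hW : IsCoverOf W
      (segBetween (relBoundary (Θ ∩ Metric.closedBall x (4 * ε - ‖x‖))) x
        (Θ \ (Θ ∩ Metric.closedBall 0 (12 * ε))))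
      (2 * ε - ‖x‖ / 2))
    (w : V) (hw : w ∈ W) (lam : ℝ) (hlam : 0 ≤ lam)
    (hnorm : ‖x + lam • (w - x)‖ = 4 * ε) :
    x + lam • (w - x) ∈ Θ := by
  obtain ⟨-, hwseg⟩ := hW.1 hw
  simp only [Set.mem_iUnion] at hwseg
  obtain ⟨b, hb, hwb⟩ := hwseg
  obtain ⟨hbΘ, hbout⟩ := hb
  have hbnorm : 12 * ε < ‖b‖ := by
    have : b ∉ Metric.closedBall (0 : V) (12 * ε) := fun h => hbout ⟨hbΘ, h⟩
    simpa [Metric.mem_closedBall, dist_zero_right, not_le] using this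
  rw [segment_eq_image'] at hwb
  obtain ⟨t, ht, rfl⟩ := hwb
  have key : x + lam • (x + t • (b - x) - x) = x + (lam * t) • (b - x) := by
    rw [add_sub_cancel_left, smul_smul]
  rw [key] at hnorm ⊢
  rcases le_or_gt (lam * t) 1 with hle | hgt
  · have hmem : x + (lam * t) • (b - x) ∈ segment ℝ x b := by
      rw [segment_eq_image']
      exact ⟨lam * t, ⟨mul_nonneg hlam ht.1, hle⟩, rfl⟩
    exact hconv.segment_subset hxΘ hbΘ hmem
  · exfalso
    have h8 : (8 : ℝ) * ε < ‖b - x‖ := by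
      have := norm_sub_norm_le b x
      linarith
    have h1 : ‖(lam * t) • (b - x)‖ = (lam * t) * ‖b - x‖ := by
      rw [norm_smul, Real.norm_eq_abs, abs_of_pos (by linarith)]
    have h2 : ‖(lam * t) • (b - x)‖ - ‖x‖ ≤ ‖x + (lam * t) • (b - x)‖ := by
      have := norm_sub_norm_le ((lam * t) • (b - x)) (-x)
      simpa [add_comm, norm_neg, sub_neg_eq_add] using this
    have h3 : 8 * ε < (lam * t) * ‖b - x‖ := by
      calc 8 * ε = 1 * (8 * ε) := by ring
        _ < (lam * t) * ‖b - x‖ :=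
          mul_lt_mul hgt (le_of_lt h8) (by linarith) (by linarith)
    rw [h1] at h2
    linarith
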